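/- Let G be either ℂ or the open unit disk 𝔻 ⊂ ℂ, and let H(G) be the space of holomorphic functions on G endowed with the topology of uniform convergence on compact sets. The differentiation operator d/dz : H(G) → H(G), f ↦ f′, is topologizable but not mean ergodic. In particular: for every compact set K ⊂ G there is a compact set L ⊂ G such that for every m ∈ ℕ there is γ_m > 0 with sup_{z∈K} |f^{(m)}(z)| ≤ γ_m · sup_{z∈L} |f(z)| for all f ∈ H(G); but there exists f ∈ H(G) for which the Cesàro means (1/n)∑_{m=1}^{n} f^{(m)} do not converge in H(G). -/

import Mathlib

open Filter Finset

noncomputable section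

/-- The `n`-th Cesàro mean `T^{[n]} = (1/n) ∑_{m=1}^n T^m` of an operator on `ℂ → ℂ`. -/
def cesaroC (T : (ℂ → ℂ) → ℂ → ℂ) (n : ℕ) (f : ℂ → ℂ) : ℂ → ℂ :=
  (n : ℂ)⁻¹ • ∑ m ∈ Icc 1 n, T^[m] f

/-- The differentiation operator on functions `ℂ → ℂ`. -/
def derivOp (f : ℂ → ℂ) : ℂ → ℂ := deriv f

open Metric Real in
/-- Cauchy estimate for the `m`-th derivative. -/
lemma cauchy_est {f : ℂ → ℂ} {z : ℂ} {δ : ℝ} (hδ : 0 < δ)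
    (hd : DifferentiableOn ℂ f (closedBall z δ)) {C : ℝ}
    (hC : ∀ w ∈ closedBall z δ, ‖f w‖ ≤ C) (m : ℕ) :
    ‖iteratedDeriv m f z‖ ≤ ((m.factorial : ℝ) * δ⁻¹ ^ m) * C := by
  have hC0 : 0 ≤ C := le_trans (norm_nonneg _) (hC z (mem_closedBall_self hδ.le))
  set R : NNReal := ⟨δ, hδ.le⟩ with hRdef
  have hR : 0 < R := by exact_mod_cast hδ
  have hRδ : (R : ℝ) = δ := rfl
  have h : HasFPowerSeriesOnBall f (cauchyPowerSeries f z R) z R := by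
    refine DifferentiableOn.hasFPowerSeriesOnBall ?_ hR
    rwa [hRδ]
  have h1 : iteratedDeriv m f z = (m.factorial : ℂ) * (cauchyPowerSeries f z R m fun _ => 1) := by
    rw [iteratedDeriv_eq_iteratedFDeriv, ← h.factorial_smul 1 m, nsmul_eq_mul]
  have h2 : ‖cauchyPowerSeries f z (R : ℝ) m fun _ => (1 : ℂ)‖
      ≤ ‖cauchyPowerSeries f z (R : ℝ) m‖ := by
    have := (cauchyPowerSeries f z (R : ℝ) m).le_opNorm fun _ => (1 : ℂ)
    simpa using this
  have hcont : ContinuousOn f (closedBall z δ) := hd.continuousOn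
  have hc2 : Continuous fun θ : ℝ => ‖f (circleMap z δ θ)‖ := by
    rw [← continuousOn_univ]
    exact (hcont.comp (continuous_circleMap z δ).continuousOn
      fun θ _ => sphere_subset_closedBall (circleMap_mem_sphere z hδ.le θ)).norm
  have hI : (∫ θ : ℝ in (0)..(2 * π), ‖f (circleMap z δ θ)‖) ≤ 2 * π * C := by
    calc (∫ θ : ℝ in (0)..(2 * π), ‖f (circleMap z δ θ)‖)
        ≤ ∫ _ : ℝ in (0)..(2 * π), C :=
          intervalIntegral.integral_mono_on Real.two_pi_pos.le (hc2.intervalIntegrable _ _)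
            intervalIntegrable_const
            (fun θ _ => hC _ (sphere_subset_closedBall (circleMap_mem_sphere z hδ.le θ)))
      _ = 2 * π * C := by simp [mul_comm]
  have h3 : ‖cauchyPowerSeries f z (R : ℝ) m‖ ≤ C * δ⁻¹ ^ m := by
    refine (norm_cauchyPowerSeries_le f z (R : ℝ) m).trans ?_
    rw [hRδ, abs_of_pos hδ]
    have hπ : (0 : ℝ) < (2 * π)⁻¹ := by positivity
    have : (2 * π)⁻¹ * (∫ θ : ℝ in (0)..(2 * π), ‖f (circleMap z δ θ)‖)
        ≤ (2 * π)⁻¹ * (2 * π * C) := by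
      exact mul_le_mul_of_nonneg_left hI hπ.le
    have h2π : (2 * π)⁻¹ * (2 * π * C) = C := by
      field_simp
    refine mul_le_mul_of_nonneg_right ?_ (by positivity)
    rw [← h2π]; exact this
  rw [h1, norm_mul, Complex.norm_natCast]
  calc (m.factorial : ℝ) * ‖cauchyPowerSeries f z (R : ℝ) m fun _ => (1 : ℂ)‖
      ≤ (m.factorial : ℝ) * (C * δ⁻¹ ^ m) := by
        refine mul_le_mul_of_nonneg_left (h2.trans h3) (by positivity)
    _ = ((m.factorial : ℝ) * δ⁻¹ ^ m) * C := by ring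

open Metric in
/-- The topologizability estimate, reduced to concentric closed balls. -/
lemma part1_aux {G : Set ℂ} {c : ℂ} {ρ δ : ℝ} (hδ : 0 < δ)
    (hLG : closedBall c (ρ + δ) ⊆ G) (K : Set ℂ) (hK : K ⊆ closedBall c ρ) :
    ∃ L : Set ℂ, L ⊆ G ∧ IsCompact L ∧
      ∀ m : ℕ, 1 ≤ m → ∃ γ > (0 : ℝ), ∀ f : ℂ → ℂ, DifferentiableOn ℂ f G → ∀ z ∈ K,
        ‖derivOp^[m] f z‖ ≤ γ * ⨆ y ∈ L, ‖f y‖ := by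
  refine ⟨closedBall c (ρ + δ), hLG, isCompact_closedBall _ _,
    fun m _ => ⟨(m.factorial : ℝ) * δ⁻¹ ^ m, by positivity, ?_⟩⟩
  intro f hf z hz
  set L := closedBall c (ρ + δ) with hLdef
  have hzL : closedBall z δ ⊆ L := by
    intro w hw
    have h1 : dist w z ≤ δ := mem_closedBall.1 hw
    have h2 : dist z c ≤ ρ := mem_closedBall.1 (hK hz)
    exact mem_closedBall.2 (by
      calc dist w c ≤ dist w z + dist z c := dist_triangle _ _ _
        _ ≤ δ + ρ := add_le_add h1 h2
        _ = ρ + δ := add_comm _ _)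
  have hcont : ContinuousOn (fun y => ‖f y‖) L := ((hf.mono hLG).continuousOn).norm
  obtain ⟨M, hM⟩ : BddAbove ((fun y => ‖f y‖) '' L) :=
    ((isCompact_closedBall _ _).image_of_continuousOn hcont).bddAbove
  have hb : BddAbove (Set.range fun y => ⨆ _ : y ∈ L, ‖f y‖) := by
    refine ⟨max M 0, ?_⟩
    rintro x ⟨y, rfl⟩
    show (⨆ _ : y ∈ L, ‖f y‖) ≤ max M 0
    by_cases hy : y ∈ L
    · rw [ciSup_pos hy]
      exact le_max_of_le_left (hM ⟨y, hy, rfl⟩)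
    · have : (⨆ _ : y ∈ L, ‖f y‖) = 0 := by
        haveI : IsEmpty (y ∈ L) := ⟨hy⟩
        exact Real.iSup_of_isEmpty _
      rw [this]; exact le_max_right _ _
  have hCle : ∀ w ∈ L, ‖f w‖ ≤ ⨆ y ∈ L, ‖f y‖ := by
    intro w hw
    refine le_trans ?_ (le_ciSup hb w)
    exact (ciSup_pos (f := fun _ : w ∈ L => ‖f w‖) hw).ge
  have hde : derivOp = deriv := rfl
  have hop : derivOp^[m] f z = iteratedDeriv m f z := by
    rw [iteratedDeriv_eq_iterate, ← hde]
  rw [hop]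
  exact cauchy_est hδ (hf.mono (hzL.trans hLG)) (fun w hw => hCle w (hzL hw)) m

lemma derivOp_iter_exp (m : ℕ) :
    derivOp^[m] (fun z => Complex.exp (2 * z)) = fun z => 2 ^ m * Complex.exp (2 * z) := by
  induction m with
  | zero => funext z; simp
  | succ m ih =>
    rw [Function.iterate_succ_apply', ih]
    funext z
    have h1 : HasDerivAt (fun z : ℂ => 2 * z) 2 z := by
      simpa using (hasDerivAt_id z).const_mul (2 : ℂ)
    have h : HasDerivAt (fun z : ℂ => 2 ^ m * Complex.exp (2 * z))
        (2 ^ (m + 1) * Complex.exp (2 * z)) z := by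
      have := HasDerivAt.const_mul ((2 : ℂ) ^ m) h1.cexp
      rw [show (2 : ℂ) ^ (m + 1) * Complex.exp (2 * z) = 2 ^ m * (Complex.exp (2 * z) * 2) by ring]
      exact this
    simpa [derivOp] using h.deriv

/-- Theorem 4.4 (iii): on `H(G)` for `G ∈ {ℂ, 𝔻}`, the differentiation operator is
topologizable, but there is `f ∈ H(G)` whose Cesàro means do not converge in `H(G)`
(so `d/dz` is not mean ergodic). -/
theorem statement18 (G : Set ℂ) (hG : G = Set.univ ∨ G = Metric.ball 0 1) :
    (∀ K : Set ℂ, K ⊆ G → IsCompact K → ∃ L : Set ℂ, L ⊆ G ∧ IsCompact L ∧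
      ∀ m : ℕ, 1 ≤ m → ∃ γ > (0 : ℝ), ∀ f : ℂ → ℂ, DifferentiableOn ℂ f G → ∀ z ∈ K,
        ‖derivOp^[m] f z‖ ≤ γ * ⨆ y ∈ L, ‖f y‖) ∧
    (∃ f : ℂ → ℂ, DifferentiableOn ℂ f G ∧
      ¬ ∃ g : ℂ → ℂ, DifferentiableOn ℂ g G ∧ ∀ K : Set ℂ, K ⊆ G → IsCompact K →
        TendstoUniformlyOn (fun n => cesaroC derivOp n f) g atTop K) := by
  constructor
  · intro K hKG hKc
    rcases hG with rfl | rfl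
    · obtain ⟨r, hr⟩ := hKc.isBounded.subset_closedBall 0
      exact part1_aux one_pos (Set.subset_univ _) K hr
    · rcases K.eq_empty_or_nonempty with rfl | hne
      · have h : Metric.closedBall (0 : ℂ) (0 + 4⁻¹) ⊆ Metric.ball 0 1 := by
          intro w hw
          simp only [Metric.mem_closedBall, Metric.mem_ball] at hw ⊢
          linarith
        exact part1_aux (by norm_num : (0 : ℝ) < 4⁻¹) h ∅
          (by simp : (∅ : Set ℂ) ⊆ Metric.closedBall 0 0)
      · obtain ⟨z0, hz0, hmax⟩ := hKc.exists_isMaxOn hne continuous_norm.continuousOn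
        have hρ : ‖z0‖ < 1 := by simpa [Metric.mem_ball] using hKG hz0
        have hδ : 0 < (1 - ‖z0‖) / 2 := by linarith
        have hsub : Metric.closedBall (0 : ℂ) (‖z0‖ + (1 - ‖z0‖) / 2) ⊆ Metric.ball 0 1 := by
          intro w hw
          simp only [Metric.mem_closedBall, Metric.mem_ball] at hw ⊢
          linarith
        have hKsub : K ⊆ Metric.closedBall 0 ‖z0‖ := fun z hz => by
          simpa [Metric.mem_closedBall] using hmax hz
        exact part1_aux hδ hsub K hKsub
  · refine ⟨fun z => Complex.exp (2 * z), ?_, ?_⟩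
    · exact ((differentiable_id.const_mul (2 : ℂ)).cexp).differentiableOn
    · rintro ⟨g, hg, hconv⟩
      have h0G : (0 : ℂ) ∈ G := by
        rcases hG with rfl | rfl
        · trivial
        · simp
      have htend : Tendsto (fun n => cesaroC derivOp n (fun z => Complex.exp (2 * z)) 0)
          atTop (nhds (g 0)) :=
        (hconv {0} (Set.singleton_subset_iff.2 h0G) isCompact_singleton).tendsto_at rfl
      have hval : ∀ n : ℕ, cesaroC derivOp n (fun z => Complex.exp (2 * z)) 0
          = (n : ℂ)⁻¹ * ∑ m ∈ Icc 1 n, (2 : ℂ) ^ m := by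
        intro n
        simp [cesaroC, derivOp_iter_exp, Finset.sum_apply, Complex.exp_zero]
      have hlow : ∀ n : ℕ, 1 ≤ n →
          (2 : ℝ) ^ n / n ≤ ‖cesaroC derivOp n (fun z => Complex.exp (2 * z)) 0‖ := by
        intro n hn
        rw [hval n, norm_mul, norm_inv, Complex.norm_natCast]
        have hsum : (∑ m ∈ Icc 1 n, (2 : ℂ) ^ m)
            = (((∑ m ∈ Icc 1 n, (2 : ℝ) ^ m) : ℝ) : ℂ) := by push_cast; ring
        have hnn : (0 : ℝ) ≤ ∑ m ∈ Icc 1 n, (2 : ℝ) ^ m :=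
          Finset.sum_nonneg fun m _ => by positivity
        have hge : (2 : ℝ) ^ n ≤ ∑ m ∈ Icc 1 n, (2 : ℝ) ^ m :=
          Finset.single_le_sum (fun m _ => by positivity : ∀ m ∈ Icc 1 n, (0:ℝ) ≤ 2 ^ m)
            (Finset.mem_Icc.2 ⟨hn, le_refl n⟩)
        rw [hsum, Complex.norm_real, Real.norm_eq_abs, abs_of_nonneg hnn]
        rw [div_eq_inv_mul]
        have hn0 : (0 : ℝ) < (n : ℝ)⁻¹ := by
          have : (0 : ℝ) < n := by exact_mod_cast hn
          positivity
        exact mul_le_mul_of_nonneg_left hge hn0.le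
      set C := ‖g 0‖ + 1 with hCdef
      have hev1 : ∀ᶠ n : ℕ in atTop,
          ‖cesaroC derivOp n (fun z => Complex.exp (2 * z)) 0‖ < C :=
        htend.norm.eventually_lt_const (by simp [hCdef])
      have hlo := isLittleO_pow_const_const_pow_of_one_lt (R := ℝ) 1
        (by norm_num : (1 : ℝ) < 2)
      have hCpos : (0 : ℝ) < C + 1 := by positivity
      have hev2 := hlo.def (by positivity : (0 : ℝ) < (C + 1)⁻¹)
      obtain ⟨n, ⟨hn1, hn2⟩, hn3⟩ := ((hev1.and hev2).and (eventually_ge_atTop 1)).exists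
      have hnR : (0 : ℝ) < n := by exact_mod_cast hn3
      have h2 : (C + 1) * n ≤ 2 ^ n := by
        have hb : (n : ℝ) ≤ (C + 1)⁻¹ * 2 ^ n := by
          simpa [abs_of_nonneg, Real.norm_eq_abs, abs_of_pos, hnR.le,
            pow_nonneg (by norm_num : (0:ℝ) ≤ 2)] using hn2
        calc (C + 1) * n ≤ (C + 1) * ((C + 1)⁻¹ * 2 ^ n) :=
              mul_le_mul_of_nonneg_left hb hCpos.le
          _ = 2 ^ n := by field_simp
      have h3 : C + 1 ≤ (2 : ℝ) ^ n / n := (le_div_iff₀ hnR).2 h2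
      have h4 := hlow n hn3
      linarith
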